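/- Let A be a finite nonempty set. For each i ∈ A let I_i = {B ⊆ A : i ∈ B}, a collection of subsets of A. Let 𝒞 be the smallest collection of subsets of the power set 𝒫(A) that contains I_i for every i ∈ A and is closed under the three operations (C, C') ↦ C ∪ C', (C, C') ↦ C ∩ C', and (C, C') ↦ C ∩ (𝒫(A) ∖ C'). Then 𝒞 is exactly the collection {C ⊆ 𝒫(A) : ∅ ∉ C} of all families of subsets of A that do not contain the empty set. -/

import Mathlib

/-- The inductive closure of the collections `I_i = {B ⊆ A | i ∈ B}` under union,
intersection, and intersection with complement. -/
inductive GenFam {A : Type*} : Set (Set A) → Prop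
  | base (i : A) : GenFam {B : Set A | i ∈ B}
  | union {C C' : Set (Set A)} : GenFam C → GenFam C' → GenFam (C ∪ C')
  | inter {C C' : Set (Set A)} : GenFam C → GenFam C' → GenFam (C ∩ C')
  | sdiff {C C' : Set (Set A)} : GenFam C → GenFam C' → GenFam (C ∩ C'ᶜ)

lemma genFam_empty {A : Type*} [Nonempty A] : GenFam (∅ : Set (Set A)) := by
  obtain ⟨i⟩ := ‹Nonempty A›
  have := GenFam.sdiff (GenFam.base i) (GenFam.base i)
  simpa using this

lemma genFam_supsets {A : Type*} (B : Finset A) (hB : B.Nonempty) :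
    GenFam {C : Set A | ∀ i ∈ B, i ∈ C} := by
  classical
  induction hB using Finset.Nonempty.cons_induction with
  | singleton a =>
    have := GenFam.base a
    convert this using 1
    ext C; simp
  | cons a s ha hs ih =>
    have := (GenFam.base a).inter ih
    convert this using 1
    ext C; simp [Finset.forall_mem_cons]

lemma genFam_sdiff_finset {A : Type*} {D : Set (Set A)} (hD : GenFam D) (s : Finset A) :
    GenFam {C ∈ D | ∀ i ∈ s, i ∉ C} := by
  classical
  induction s using Finset.induction with
  | empty => simpa using hD
  | @insert a s ha ih =>
    have := ih.sdiff (GenFam.base a)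
    convert this using 1
    ext C
    simp only [Set.mem_sep_iff, Finset.forall_mem_insert, Set.mem_inter_iff,
      Set.mem_compl_iff, Set.mem_setOf_eq]
    tauto

lemma genFam_singleton {A : Type*} [Fintype A] (B : Set A) (hB : B.Nonempty) :
    GenFam ({B} : Set (Set A)) := by
  classical
  have hBf : B.Finite := Set.toFinite B
  have h1 := genFam_supsets hBf.toFinset (hBf.toFinset_nonempty.mpr hB)
  have h2 := genFam_sdiff_finset h1 hBf.toFinsetᶜ
  convert h2 using 1
  ext C
  simp only [Set.mem_singleton_iff, Set.mem_sep_iff, Set.mem_setOf_eq, Finset.mem_compl,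
    Set.Finite.mem_toFinset]
  constructor
  · rintro rfl
    exact ⟨fun i hi => hi, fun i hi h => hi h⟩
  · rintro ⟨h3, h4⟩
    ext x
    constructor
    · intro hx
      by_contra hxB
      exact h4 x hxB hx
    · intro hx
      exact h3 x hx

/-- For a finite nonempty set `A`, the smallest collection of subsets of the
power set of `A` containing all `I_i = {B ⊆ A | i ∈ B}` and closed under `∪`, `∩`, and
`∩ ·ᶜ` is exactly the collection of all families of subsets of `A` not containing `∅`. -/
theorem stmt2 {A : Type*} [Fintype A] [Nonempty A] :
    {C : Set (Set A) | GenFam C} = {C : Set (Set A) | ∅ ∉ C} := by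
  ext C
  simp only [Set.mem_setOf_eq]
  constructor
  · intro h
    induction h with
    | base i => simp
    | union _ _ ih ih' => rintro (h | h); exacts [ih h, ih' h]
    | inter _ _ ih _ => exact fun hc => ih hc.1
    | sdiff _ _ ih _ => exact fun hc => ih hc.1
  · intro hC
    refine Set.Finite.induction_on (motive := fun s _ => ∅ ∉ s → GenFam s) C (Set.toFinite C)
      (fun _ => genFam_empty) ?_ hC
    intro B s _ _ ih hne
    have hB : B.Nonempty := by
      rw [Set.nonempty_iff_ne_empty]
      rintro rfl
      exact hne (Set.mem_insert _ _)
    have : GenFam ({B} ∪ s) :=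
      (genFam_singleton B hB).union (ih fun h => hne (Set.mem_insert_of_mem _ h))
    simpa [Set.singleton_union] using this
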